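/- If (s(t), x(t)) is a solution of the impulsive SCF model in ℝ₊^{n+1} whose initial nutrient vector satisfies s(0) ∈ Ω₀, then the solution has no impulses, i.e., s₁(t) > s̄₁ for all t ≥ 0. -/

import Mathlib

open Filter Set Topology

noncomputable section

/-- Hypotheses on the uptake function `F`: Lipschitz on the closed positive cone,
vanishing when some nutrient is exhausted, positive on the open positive cone, and
strictly increasing in each argument on the positive cone. -/
def FHyp {n : ℕ} (F : (Fin n → ℝ) → ℝ) : Prop :=
  (∃ K : NNReal, LipschitzOnWith K F {s : Fin n → ℝ | ∀ i, 0 ≤ s i}) ∧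
  (∀ s : Fin n → ℝ, (∀ i, 0 ≤ s i) → (∃ i, s i = 0) → F s = 0) ∧
  (∀ s : Fin n → ℝ, (∀ i, 0 < s i) → 0 < F s) ∧
  (∀ s : Fin n → ℝ, (∀ i, 0 < s i) → ∀ i : Fin n, ∀ ε : ℝ, 0 < ε →
    F s < F (Function.update s i (s i + ε)))

/-- The component Lyapunov-like function `V_i(s) = y₁(s₁ⁱⁿ - s₁) - y_i(s_iⁱⁿ - s_i)`. -/
def Vfun {n : ℕ} [NeZero n] (y sIn : Fin n → ℝ) (i : Fin n) (s : Fin n → ℝ) : ℝ :=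
  y 0 * (sIn 0 - s 0) - y i * (sIn i - s i)

/-- `V̄_i = y₁(s₁ⁱⁿ - s̄₁) - y_i s_iⁱⁿ`. -/
def Vbar {n : ℕ} [NeZero n] (y sIn : Fin n → ℝ) (sbar1 : ℝ) (i : Fin n) : ℝ :=
  y 0 * (sIn 0 - sbar1) - y i * sIn i

/-- `Ω₀ = {s ∈ ℝⁿ₊ : s₁ ≥ s̄₁, V_i(s) < V̄_i for at least one i = 2,…,n}`. -/
def Omega0 {n : ℕ} [NeZero n] (y sIn : Fin n → ℝ) (sbar1 : ℝ) : Set (Fin n → ℝ) :=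
  {s | (∀ i, 0 < s i) ∧ sbar1 ≤ s 0 ∧ ∃ i, i ≠ 0 ∧ Vfun y sIn i s < Vbar y sIn sbar1 i}

/-- `Ω₁ = {s ∈ ℝⁿ₊ : s₁ ≥ s̄₁, V_i(s) > V̄_i for all i = 2,…,n}`. -/
def Omega1 {n : ℕ} [NeZero n] (y sIn : Fin n → ℝ) (sbar1 : ℝ) : Set (Fin n → ℝ) :=
  {s | (∀ i, 0 < s i) ∧ sbar1 ≤ s 0 ∧ ∀ i, i ≠ 0 → Vbar y sIn sbar1 i < Vfun y sIn i s}

/-- `φ_ν(s⁰) = s⁰ - ν y₁ (s₁⁰ - s̄₁) Y`, with `Y = (1/y₁, …, 1/yₙ)`. -/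
def phiNu {n : ℕ} [NeZero n] (y : Fin n → ℝ) (sbar1 ν : ℝ) (s0 : Fin n → ℝ) : Fin n → ℝ :=
  fun i => s0 i - ν * (y 0 * (s0 0 - sbar1)) * (1 / y i)

/-- `I(s⁰) = y₁ (s₁⁰ - s̄₁) ∫₀¹ (1 - D / F(φ_ν(s⁰))) dν`, the net biomass change over one cycle. -/
def Ifun {n : ℕ} [NeZero n] (F : (Fin n → ℝ) → ℝ) (D : ℝ) (y : Fin n → ℝ)
    (sbar1 : ℝ) (s0 : Fin n → ℝ) : ℝ :=
  y 0 * (s0 0 - sbar1) * ∫ ν in (0:ℝ)..1, (1 - D / F (phiNu y sbar1 ν s0))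

/-- `ŝ⁺(r) = sⁱⁿ - (1 - r) y₁ (s₁ⁱⁿ - s̄₁) Y`. -/
def shatP {n : ℕ} [NeZero n] (y sIn : Fin n → ℝ) (sbar1 r : ℝ) : Fin n → ℝ :=
  fun i => sIn i - (1 - r) * (y 0 * (sIn 0 - sbar1)) * (1 / y i)

/-- `μ(r) = y₁ (s̄₁⁺ - s̄₁) ∫₀¹ (1 - D / F(φ_ν(ŝ⁺(r)))) dν`, where `s̄₁⁺ = r s₁ⁱⁿ + (1-r) s̄₁`. -/
def muFun {n : ℕ} [NeZero n] (F : (Fin n → ℝ) → ℝ) (D : ℝ) (y sIn : Fin n → ℝ)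
    (sbar1 r : ℝ) : ℝ :=
  y 0 * ((r * sIn 0 + (1 - r) * sbar1) - sbar1) *
    ∫ ν in (0:ℝ)..1, (1 - D / F (phiNu y sbar1 ν (shatP y sIn sbar1 r)))

/-- `Γ_ρ⁺ = {s ∈ ℝⁿ₊ : s₁ = s̄₁⁺, V_i(s) > -ρ for all i = 2,…,n}`. -/
def GammaRho {n : ℕ} [NeZero n] (y sIn : Fin n → ℝ) (sbar1 r ρ : ℝ) : Set (Fin n → ℝ) :=
  {s | (∀ i, 0 < s i) ∧ s 0 = r * sIn 0 + (1 - r) * sbar1 ∧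
    ∀ i, i ≠ 0 → -ρ < Vfun y sIn i s}

/-- `Ω^ρ = {s ∈ Ω₁ : V_i(s) > -ρ for all i = 2,…,n}`. -/
def OmegaRho {n : ℕ} [NeZero n] (y sIn : Fin n → ℝ) (sbar1 ρ : ℝ) : Set (Fin n → ℝ) :=
  {s | s ∈ Omega1 y sIn sbar1 ∧ ∀ i, i ≠ 0 → -ρ < Vfun y sIn i s}

/-- The cycle map `s ↦ g(φ₁(s)) = r sⁱⁿ + (1 - r) φ₁(s)`. -/
def cycMap {n : ℕ} [NeZero n] (y sIn : Fin n → ℝ) (sbar1 r : ℝ)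
    (s : Fin n → ℝ) : Fin n → ℝ :=
  fun i => r * sIn i + (1 - r) * phiNu y sbar1 1 s i

/-- A (right-continuous) solution of the impulsive self-cycling fermentation model
`eq:model`: between impulse times the ODEs hold, impulse times are exactly the times
where the left limit of `s₁` equals the threshold `s̄₁`, and at an impulse time the
state jumps according to the decanting/refilling map. -/
structure SCFSol (n : ℕ) [NeZero n] (F : (Fin n → ℝ) → ℝ) (D : ℝ) (y : Fin n → ℝ)
    (r : ℝ) (sIn : Fin n → ℝ) (sbar1 : ℝ) where
  /-- nutrient concentrations -/
  s : ℝ → Fin n → ℝ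
  /-- biomass concentration -/
  x : ℝ → ℝ
  /-- the set of impulse times -/
  T : Set ℝ
  /-- left limits of `s` (meaningful at impulse times) -/
  sLim : ℝ → Fin n → ℝ
  /-- left limit of `x` (meaningful at impulse times) -/
  xLim : ℝ → ℝ
  T_pos : ∀ t ∈ T, 0 < t
  init : sbar1 < s 0 0
  ode_s : ∀ t : ℝ, 0 ≤ t → t ∉ T → ∀ i,
    HasDerivAt (fun τ => s τ i) (-(1 / y i) * F (s t) * x t) t
  ode_x : ∀ t : ℝ, 0 ≤ t → t ∉ T →
    HasDerivAt x ((-D + F (s t)) * x t) t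
  left_s : ∀ t ∈ T, ∀ i,
    Filter.Tendsto (fun τ => s τ i) (nhdsWithin t (Set.Iio t)) (nhds (sLim t i))
  left_x : ∀ t ∈ T, Filter.Tendsto x (nhdsWithin t (Set.Iio t)) (nhds (xLim t))
  hit : ∀ t ∈ T, sLim t 0 = sbar1
  exact_hit : ∀ t : ℝ, 0 < t → t ∉ T → s t 0 ≠ sbar1
  jump_s : ∀ t ∈ T, ∀ i, s t i = r * sIn i + (1 - r) * sLim t i
  jump_x : ∀ t ∈ T, x t = (1 - r) * xLim t

/-- Convergence of a solution to the unique periodic orbit: there are infinitely many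
impulses and, along the (increasing) enumeration of the impulse times, the post-impulse
nutrient states converge to `ŝ⁺(r)`, the post-impulse biomass converges to
`((1-r)/r) μ(r)`, and the pre-impulse biomass converges to `(1/r) μ(r)`. -/
def ConvergesToPeriodic {n : ℕ} [NeZero n] {F : (Fin n → ℝ) → ℝ} {D : ℝ}
    {y : Fin n → ℝ} {r : ℝ} {sIn : Fin n → ℝ} {sbar1 : ℝ}
    (sol : SCFSol n F D y r sIn sbar1) : Prop :=
  sol.T.Infinite ∧
  ∀ tk : ℕ → ℝ, StrictMono tk → Set.range tk = sol.T →
    (∀ i, Filter.Tendsto (fun k => sol.s (tk k) i) Filter.atTop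
      (nhds (shatP y sIn sbar1 r i))) ∧
    Filter.Tendsto (fun k => sol.x (tk k)) Filter.atTop
      (nhds ((1 - r) / r * muFun F D y sIn sbar1 r)) ∧
    Filter.Tendsto (fun k => sol.xLim (tk k)) Filter.atTop
      (nhds (1 / r * muFun F D y sIn sbar1 r))

/-- Lemma 3.3: if a solution of the impulsive SCF model in the open
positive cone starts with `s(0) ∈ Ω₀`, then no impulses occur: `s₁(t) > s̄₁` for all
`t ≥ 0`. -/
theorem scf_Omega0_no_impulses {n : ℕ} [NeZero n] (F : (Fin n → ℝ) → ℝ) (hF : FHyp F)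
    (D : ℝ) (hD : 0 < D) (y : Fin n → ℝ) (hy : ∀ i, 0 < y i)
    (sIn : Fin n → ℝ) (hsIn : ∀ i, 0 < sIn i)
    (r : ℝ) (hr : r ∈ Set.Ioo (0:ℝ) 1)
    (sbar1 : ℝ) (hsbar1 : 0 < sbar1) (hsbar1' : sbar1 < sIn 0)
    (sol : SCFSol n F D y r sIn sbar1)
    (hcone : ∀ t : ℝ, 0 ≤ t → (∀ i, 0 < sol.s t i) ∧ 0 < sol.x t)
    (h0 : sol.s 0 ∈ Omega0 y sIn sbar1) :
    sol.T = ∅ ∧ ∀ t : ℝ, 0 ≤ t → sbar1 < sol.s t 0 := by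
  obtain ⟨hpos0, hge0, i, hi0, hVi⟩ := h0
  set g : ℝ → ℝ := fun τ => y 0 * (sIn 0 - sol.s τ 0) - y i * (sIn i - sol.s τ i) with hg
  have hTempty : sol.T = ∅ := by
    by_contra hT
    have hTne : sol.T.Nonempty := Set.nonempty_iff_ne_empty.2 hT
    have hbdd : BddBelow sol.T := ⟨0, fun t ht => (sol.T_pos t ht).le⟩
    set t0 := sInf sol.T with ht0def
    have ht0le : ∀ t ∈ sol.T, t0 ≤ t := fun t ht => csInf_le hbdd ht
    have ht0nonneg : 0 ≤ t0 := le_csInf hTne fun t ht => (sol.T_pos t ht).le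
    by_cases hmem : t0 ∈ sol.T
    · -- conservation case
      have t0pos : 0 < t0 := sol.T_pos t0 hmem
      have hnoT : ∀ τ : ℝ, τ < t0 → τ ∉ sol.T := fun τ hlt hτ =>
        absurd (ht0le τ hτ) (not_le.2 hlt)
      have hderiv : ∀ τ : ℝ, 0 ≤ τ → τ < t0 → HasDerivAt g 0 τ := by
        intro τ hτ0 hτl
        have hτT := hnoT τ hτl
        have h0' := sol.ode_s τ hτ0 hτT 0
        have hi' := sol.ode_s τ hτ0 hτT i
        have H := (((hasDerivAt_const τ (sIn 0)).sub h0').const_mul (y 0)).sub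
          (((hasDerivAt_const τ (sIn i)).sub hi').const_mul (y i))
        refine (H : HasDerivAt g _ τ).congr_deriv ?_
        have hy0 := (hy 0).ne'
        have hyi := (hy i).ne'
        have e0 : y 0 * (1 / y 0) = 1 := mul_one_div_cancel hy0
        have ei : y i * (1 / y i) = 1 := mul_one_div_cancel hyi
        linear_combination (F (sol.s τ) * sol.x τ) * e0 - (F (sol.s τ) * sol.x τ) * ei
      have hconst : ∀ τ : ℝ, 0 ≤ τ → τ < t0 → g τ = g 0 := by
        intro b hb0 hbl
        have hcont : ContinuousOn g (Set.Icc 0 b) := fun τ hτ =>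
          ((hderiv τ hτ.1 (lt_of_le_of_lt hτ.2 hbl)).continuousAt).continuousWithinAt
        have hd : ∀ x ∈ Set.Ico 0 b, HasDerivWithinAt g 0 (Set.Ici x) x := fun x hx =>
          ((hderiv x hx.1 (hx.2.trans hbl)).hasDerivWithinAt)
        exact constant_of_has_deriv_right_zero hcont hd b ⟨hb0, le_refl b⟩
      have hevpos : ∀ᶠ τ in nhdsWithin t0 (Set.Iio t0), (0:ℝ) < τ :=
        (eventually_gt_nhds t0pos).filter_mono nhdsWithin_le_nhds
      have hevlt : ∀ᶠ τ in nhdsWithin t0 (Set.Iio t0), τ < t0 :=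
        eventually_mem_nhdsWithin.mono fun τ hτ => hτ
      have hlim : Filter.Tendsto g (nhdsWithin t0 (Set.Iio t0))
          (nhds (y 0 * (sIn 0 - sol.sLim t0 0) - y i * (sIn i - sol.sLim t0 i))) := by
        have l0 := sol.left_s t0 hmem 0
        have li := sol.left_s t0 hmem i
        exact ((tendsto_const_nhds.sub l0).const_mul _).sub
          ((tendsto_const_nhds.sub li).const_mul _)
      have hlim' : Filter.Tendsto g (nhdsWithin t0 (Set.Iio t0)) (nhds (g 0)) := by
        refine tendsto_const_nhds.congr' ?_
        filter_upwards [hevpos, hevlt] with τ h1 h2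
        exact (hconst τ h1.le h2).symm
      have huniq := tendsto_nhds_unique hlim hlim'
      have hsLimnn : 0 ≤ sol.sLim t0 i := by
        refine ge_of_tendsto (sol.left_s t0 hmem i) ?_
        filter_upwards [hevpos] with τ h1
        exact ((hcone τ h1.le).1 i).le
      have hhit := sol.hit t0 hmem
      rw [hhit] at huniq
      have hVi' : g 0 < Vbar y sIn sbar1 i := hVi
      have hVbar : Vbar y sIn sbar1 i = y 0 * (sIn 0 - sbar1) - y i * sIn i := rfl
      have hmul : 0 ≤ y i * sol.sLim t0 i := mul_nonneg (hy i).le hsLimnn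
      rw [hVbar] at hVi'
      nlinarith [hVi', huniq, hmul]
    · -- accumulation case
      have hcont : ContinuousAt (fun τ => sol.s τ 0) t0 :=
        (sol.ode_s t0 ht0nonneg hmem 0).continuousAt
      have heq : sol.s t0 0 = sbar1 := by
        by_contra hne
        have hεpos : 0 < |sol.s t0 0 - sbar1| / 2 := by
          have := abs_pos.2 (sub_ne_zero.2 hne); linarith
        set ε := |sol.s t0 0 - sbar1| / 2 with hε
        obtain ⟨δ, hδpos, hδ⟩ := Metric.continuousAt_iff.1 hcont ε hεpos
        obtain ⟨tk, htk, htklt⟩ := exists_lt_of_csInf_lt hTne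
          (show sInf sol.T < t0 + δ by rw [← ht0def]; linarith)
        have ht0tk : t0 < tk := lt_of_le_of_ne (ht0le tk htk)
          (fun h => hmem (h ▸ htk))
        have hl := sol.left_s tk htk 0
        rw [sol.hit tk htk] at hl
        have hev1 : ∀ᶠ τ in nhdsWithin tk (Set.Iio tk), dist (sol.s τ 0) sbar1 < ε :=
          hl (Metric.ball_mem_nhds sbar1 hεpos)
        have hev2 : ∀ᶠ τ in nhdsWithin tk (Set.Iio tk), t0 < τ :=
          (eventually_gt_nhds ht0tk).filter_mono nhdsWithin_le_nhds
        have hev3 : ∀ᶠ τ in nhdsWithin tk (Set.Iio tk), τ < tk :=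
          eventually_mem_nhdsWithin.mono fun τ hτ => hτ
        obtain ⟨τ, h1, h2, h3⟩ := (hev1.and (hev2.and hev3)).exists
        have hdistτ : dist τ t0 < δ := by
          rw [Real.dist_eq, abs_lt]; constructor <;> linarith
        have := hδ hdistτ
        rw [Real.dist_eq] at h1 this
        have habs := abs_sub_le (sol.s t0 0) (sol.s τ 0) sbar1
        have hsw : |sol.s t0 0 - sol.s τ 0| < ε := by rw [abs_sub_comm]; exact this
        linarith [habs, hsw, h1]
      rcases eq_or_lt_of_le ht0nonneg with h0|h0
      · rw [← h0] at heq; exact absurd heq (ne_of_gt sol.init)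
      · exact sol.exact_hit t0 h0 hmem heq
  refine ⟨hTempty, ?_⟩
  intro t ht
  rcases eq_or_lt_of_le ht with h|h
  · rw [← h]; exact sol.init
  · by_contra hle
    push_neg at hle
    have hnotT : ∀ τ : ℝ, τ ∉ sol.T := by simp [hTempty]
    have hne := sol.exact_hit t h (hnotT t)
    have hcontOn : ContinuousOn (fun τ => sol.s τ 0) (Set.Icc 0 t) := fun τ hτ =>
      ((sol.ode_s τ hτ.1 (hnotT τ) 0).continuousAt).continuousWithinAt
    have hmemv : sbar1 ∈ Set.Icc (sol.s t 0) (sol.s 0 0) :=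
      ⟨hle, sol.init.le⟩
    obtain ⟨τ, hτmem, hτ⟩ := intermediate_value_Icc' ht hcontOn hmemv
    rcases eq_or_lt_of_le hτmem.1 with h0|h0
    · rw [← h0] at hτ; exact absurd (show sol.s 0 0 = sbar1 from hτ) (ne_of_gt sol.init)
    · exact sol.exact_hit τ h0 (hnotT τ) hτ


end
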